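/- Let f : 2^{[m]} → ℝ be a monotone nondecreasing submodular set function with f(∅) = 0, and let C_greedy be the set obtained by k steps of greedy maximization (each step adding an element of maximal marginal gain). Then f(C_greedy) ≥ (1 − 1/e) · max_{|C| = k} f(C). -/
import Mathlib

theorem aux_telescope {m : ℕ} (f : Finset (Fin m) → ℝ)
    (hmono : ∀ S T : Finset (Fin m), S ⊆ T → f S ≤ f T)
    (hsub : ∀ S T : Finset (Fin m), S ⊆ T → ∀ i ∉ T,
      f (insert i T) - f T ≤ f (insert i S) - f S) :
    ∀ (A S : Finset (Fin m)), f (S ∪ A) ≤ f S + ∑ y ∈ A, (f (insert y S) - f S) := by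
  intro A
  induction A using Finset.induction with
  | empty => intro S; simp
  | @insert a A ha ih =>
    intro S
    rw [Finset.sum_insert ha]
    have hins : S ∪ insert a A = insert a (S ∪ A) := by
      ext z; simp [or_comm, or_left_comm, or_assoc]
    rw [hins]
    by_cases haS : a ∈ S ∪ A
    · rw [Finset.insert_eq_self.mpr haS]
      have h1 := ih S
      have h2 : f S ≤ f (insert a S) := hmono _ _ (Finset.subset_insert _ _)
      linarith
    · have h1 := ih S
      have h2 := hsub S (S ∪ A) Finset.subset_union_left a haS
      linarith

theorem greedy_submodular_approximation {m : ℕ} (f : Finset (Fin m) → ℝ)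
    (hmono : ∀ S T : Finset (Fin m), S ⊆ T → f S ≤ f T)
    (hsub : ∀ S T : Finset (Fin m), S ⊆ T → ∀ i ∉ T,
      f (insert i T) - f T ≤ f (insert i S) - f S)
    (hzero : f ∅ = 0)
    (k : ℕ) (g : ℕ → Finset (Fin m)) (hg0 : g 0 = ∅)
    (hgreedy : ∀ t < k, ∃ x ∉ g t,
      g (t + 1) = insert x (g t) ∧
        ∀ y ∉ g t, f (insert y (g t)) ≤ f (insert x (g t))) :
    ∀ C : Finset (Fin m), C.card = k →
      (1 - (Real.exp 1)⁻¹) * f C ≤ f (g k) := by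
  intro C hC
  rcases Nat.eq_zero_or_pos k with hk0 | hkpos
  · subst hk0
    have : C = ∅ := Finset.card_eq_zero.mp hC
    rw [this, hg0, hzero]
    simp
  have hk1 : (1:ℝ) ≤ (k:ℝ) := by exact_mod_cast hkpos
  have hkpos' : (0:ℝ) < (k:ℝ) := by linarith
  have hq0 : (0:ℝ) ≤ 1 - 1/(k:ℝ) := by
    have : (1:ℝ)/(k:ℝ) ≤ 1 := by
      rw [div_le_one hkpos']; exact hk1
    linarith
  -- step inequality
  have step : ∀ t < k, f C - f (g (t+1)) ≤ (1 - 1/(k:ℝ)) * (f C - f (g t)) := by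
    intro t ht
    obtain ⟨x, hx, hg1, hmax⟩ := hgreedy t ht
    have hgain : (0:ℝ) ≤ f (g (t+1)) - f (g t) := by
      rw [hg1]
      have := hmono (g t) (insert x (g t)) (Finset.subset_insert _ _)
      linarith
    have hbound : ∀ y ∈ C, f (insert y (g t)) - f (g t) ≤ f (g (t+1)) - f (g t) := by
      intro y _
      by_cases hy : y ∈ g t
      · rw [Finset.insert_eq_self.mpr hy]; linarith
      · rw [hg1]; linarith [hmax y hy]
    have hsum : ∑ y ∈ C, (f (insert y (g t)) - f (g t)) ≤
        (k:ℝ) * (f (g (t+1)) - f (g t)) := by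
      calc ∑ y ∈ C, (f (insert y (g t)) - f (g t))
          ≤ ∑ _y ∈ C, (f (g (t+1)) - f (g t)) := Finset.sum_le_sum hbound
        _ = (k:ℝ) * (f (g (t+1)) - f (g t)) := by
            rw [Finset.sum_const, hC, nsmul_eq_mul]
    have key : f C ≤ f (g t) + (k:ℝ) * (f (g (t+1)) - f (g t)) := by
      have h1 : f C ≤ f (g t ∪ C) := hmono _ _ Finset.subset_union_right
      have h2 := aux_telescope f hmono hsub C (g t)
      linarith
    have h4 : (1/(k:ℝ)) * (f C - f (g t)) ≤
        (1/(k:ℝ)) * ((k:ℝ) * (f (g (t+1)) - f (g t))) := by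
      apply mul_le_mul_of_nonneg_left (by linarith) (by positivity)
    rw [← mul_assoc, one_div_mul_cancel hkpos'.ne', one_mul] at h4
    nlinarith
  -- induction
  have decay : ∀ t, t ≤ k → f C - f (g t) ≤ (1 - 1/(k:ℝ))^t * (f C - f (g 0)) := by
    intro t
    induction t with
    | zero => intro _; simp
    | succ t ih =>
      intro ht
      have ht' : t < k := ht
      have h1 := step t ht'
      have h2 := ih (le_of_lt ht')
      calc f C - f (g (t+1)) ≤ (1 - 1/(k:ℝ)) * (f C - f (g t)) := h1
        _ ≤ (1 - 1/(k:ℝ)) * ((1 - 1/(k:ℝ))^t * (f C - f (g 0))) :=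
            mul_le_mul_of_nonneg_left h2 hq0
        _ = (1 - 1/(k:ℝ))^(t+1) * (f C - f (g 0)) := by ring
  have hfinal := decay k le_rfl
  rw [hg0, hzero, sub_zero] at hfinal
  have hfC : 0 ≤ f C := by
    have := hmono ∅ C (Finset.empty_subset C); linarith
  have hpow : (1 - 1/(k:ℝ))^k ≤ Real.exp (-1) := by
    have h1 : (1 - 1/(k:ℝ)) ≤ Real.exp (-(1/(k:ℝ))) := by
      have := Real.add_one_le_exp (-(1/(k:ℝ)))
      linarith
    calc (1 - 1/(k:ℝ))^k ≤ (Real.exp (-(1/(k:ℝ))))^k :=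
          pow_le_pow_left₀ hq0 h1 k
      _ = Real.exp ((k:ℝ) * (-(1/(k:ℝ)))) := by rw [← Real.exp_nat_mul]
      _ = Real.exp (-1) := by
          congr 1
          field_simp
  have hpowmul : (1 - 1/(k:ℝ))^k * f C ≤ Real.exp (-1) * f C :=
    mul_le_mul_of_nonneg_right hpow hfC
  have hexp : (Real.exp 1)⁻¹ = Real.exp (-1) := by
    rw [Real.exp_neg]
  rw [hexp]
  linarith
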